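/- Let f : ℝⁿ → ℝ be differentiable, g : ℝⁿ → ℝ convex, α > 0, x ∈ ℝⁿ, and z = prox_{αg}(x - α∇f(x)). Then ⟨∇f(x), z - x⟩ + g(z) - g(x) ≤ -(1/α)‖x - z‖². -/

import Mathlib

open scoped RealInnerProductSpace

/-- Key descent inequality for the proximal gradient dynamics:
`⟨∇f(x), z - x⟩ + g(z) - g(x) ≤ -(1/α)‖x - z‖²` where
`z = prox_{αg}(x - α∇f(x))`. -/
theorem prox_grad_descent_inequality {n : ℕ}
    (f g : EuclideanSpace ℝ (Fin n) → ℝ) (f' : EuclideanSpace ℝ (Fin n) → EuclideanSpace ℝ (Fin n))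
    (hf : ∀ y, HasGradientAt f (f' y) y)
    (hg : ConvexOn ℝ Set.univ g) (α : ℝ) (hα : 0 < α)
    (x z : EuclideanSpace ℝ (Fin n))
    (hz : ∀ u, α * g z + ‖z - (x - α • f' x)‖ ^ 2 / 2 ≤
               α * g u + ‖u - (x - α • f' x)‖ ^ 2 / 2) :
    ⟪f' x, z - x⟫ + g z - g x ≤ -(1 / α) * ‖x - z‖ ^ 2 := by
  set v := x - α • f' x with hv
  have hC : (0:ℝ) ≤ ‖x - z‖ ^ 2 := by positivity
  have key : ∀ t : ℝ, 0 < t → t ≤ 1 →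
      α * (g z - g x) ≤ ⟪z - v, x - z⟫ + t / 2 * ‖x - z‖ ^ 2 := by
    intro t ht ht1
    have hu := hz (z + t • (x - z))
    have hgc : g (z + t • (x - z)) ≤ (1 - t) * g z + t * g x := by
      have h2 := hg.2 (Set.mem_univ z) (Set.mem_univ x) (by linarith : (0:ℝ) ≤ 1 - t)
        ht.le (by ring)
      have he : z + t • (x - z) = (1 - t) • z + t • x := by module
      rw [he]; simpa using h2
    have hn : ‖z + t • (x - z) - v‖ ^ 2
        = ‖z - v‖ ^ 2 + 2 * t * ⟪z - v, x - z⟫ + t ^ 2 * ‖x - z‖ ^ 2 := by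
      have he : z + t • (x - z) - v = (z - v) + t • (x - z) := by abel
      rw [he, norm_add_sq_real, real_inner_smul_right, norm_smul]
      simp [mul_pow]
      ring
    have hαg : α * g (z + t • (x - z)) ≤ α * ((1 - t) * g z + t * g x) :=
      mul_le_mul_of_nonneg_left hgc hα.le
    have ht' : t * (α * (g z - g x)) ≤ t * (⟪z - v, x - z⟫ + t / 2 * ‖x - z‖ ^ 2) := by
      nlinarith [hu, hαg, hn]
    exact le_of_mul_le_mul_left ht' ht
  have h0 : α * (g z - g x) ≤ ⟪z - v, x - z⟫ := by
    by_contra h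
    push_neg at h
    set D := α * (g z - g x) - ⟪z - v, x - z⟫ with hD
    have hDpos : 0 < D := sub_pos.mpr h
    rcases hC.eq_or_lt with hC0 | hCpos
    · have hk := key 1 one_pos le_rfl
      rw [← hC0] at hk
      linarith
    · set t := min 1 (D / ‖x - z‖ ^ 2) with htdef
      have htpos : 0 < t := lt_min one_pos (div_pos hDpos hCpos)
      have ht1 : t ≤ 1 := min_le_left _ _
      have htC : t * ‖x - z‖ ^ 2 ≤ D := by
        have : t ≤ D / ‖x - z‖ ^ 2 := min_le_right _ _
        calc t * ‖x - z‖ ^ 2 ≤ (D / ‖x - z‖ ^ 2) * ‖x - z‖ ^ 2 :=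
              mul_le_mul_of_nonneg_right this hC
          _ = D := div_mul_cancel₀ _ (ne_of_gt hCpos)
      have := key t htpos ht1
      nlinarith
  have hzv : ⟪z - v, x - z⟫ = α * ⟪f' x, x - z⟫ - ‖x - z‖ ^ 2 := by
    have he : z - v = (α • f' x) - (x - z) := by rw [hv]; abel
    rw [he, inner_sub_left, real_inner_smul_left, real_inner_self_eq_norm_sq]
  have hinner : ⟪f' x, z - x⟫ + ⟪f' x, x - z⟫ = 0 := by
    rw [← inner_add_right]
    have : (z - x) + (x - z) = (0 : EuclideanSpace ℝ (Fin n)) := by abel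
    rw [this, inner_zero_right]
  have hfin : -(1 / α) * ‖x - z‖ ^ 2 = (-(‖x - z‖ ^ 2)) / α := by ring
  rw [hfin, le_div_iff₀ hα]
  rw [hzv] at h0
  nlinarith [h0, hinner]
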